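/- arXiv:2503.14479 — 2 statements merged into one kernel-verified Lean document; each statement's English description precedes it below -/
import Mathlib

section
/- Let H be a finite-dimensional real inner product space, let β > 0, let f : H → ℝ ∪ {+∞} be proper, lower semicontinuous, and convex, let g : H → ℝ be convex and differentiable with β-Lipschitz gradient, let x be a minimizer of f + g, let 0 < ε < 1/β, and let γ ∈ [ε, 2/β − ε]. Then for any xₙ ∈ H, setting xₙ₊₁ = prox_{γ f}(xₙ − γ ∇g(xₙ)), one has ‖xₙ₊₁ − x‖² ≤ ‖xₙ − x‖² − ε² ‖∇g(xₙ) − ∇g(x)‖². -/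
open Filter Topology

noncomputable section

local notation "⟪" x ", " y "⟫" => @inner ℝ _ _ x y

section Helpers

variable {H : Type*} [NormedAddCommGroup H] [InnerProductSpace ℝ H] [CompleteSpace H]

/-- derivative of t ↦ g (x + t • w) -/
lemma line_hasDerivAt {g : H → ℝ} {x w : H} {v : H} (t : ℝ)
    (hg : HasGradientAt g v (x + t • w)) :
    HasDerivAt (fun s : ℝ => g (x + s • w)) ⟪v, w⟫ t := by
  have h1 : HasDerivAt (fun s : ℝ => x + s • w) w t := by
    simpa using ((hasDerivAt_id t).smul_const w).const_add x
  have h2 := hg.hasFDerivAt.comp_hasDerivAt t h1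
  simp only [InnerProductSpace.toDual_apply_apply] at h2
  exact h2

lemma slope_tendsto {g : H → ℝ} {x w v : H} (hg : HasGradientAt g v x) :
    Tendsto (fun t : ℝ => (g (x + t • w) - g x) / t) (𝓝[>] (0:ℝ)) (𝓝 ⟪v, w⟫) := by
  have hφ : HasDerivAt (fun s : ℝ => g (x + s • w)) ⟪v, w⟫ 0 := by
    apply line_hasDerivAt
    simpa using hg
  have h := hasDerivAt_iff_tendsto_slope.mp hφ
  have h2 : Tendsto (slope (fun s : ℝ => g (x + s • w)) 0) (𝓝[>] (0:ℝ)) (𝓝 ⟪v, w⟫) :=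
    h.mono_left (nhdsWithin_mono _ (fun t ht => ne_of_gt ht))
  refine h2.congr (fun t => ?_)
  simp [slope_def_field]

lemma grad_lower {g : H → ℝ} {g' : H → H}
    (hg_convex : ConvexOn ℝ Set.univ g)
    (hg : ∀ z : H, HasGradientAt g (g' z) z) (x y : H) :
    g x + ⟪g' x, y - x⟫ ≤ g y := by
  have key : ⟪g' x, y - x⟫ ≤ g y - g x := by
    refine le_of_tendsto (slope_tendsto (hg x)) ?_
    filter_upwards [Ioc_mem_nhdsGT_of_mem (by norm_num : (0:ℝ) ∈ Set.Ico (0:ℝ) 1)]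
      with t ht
    have ht0 : 0 < t := ht.1
    have hcomb : x + t • (y - x) = (1 - t) • x + t • y := by
      rw [smul_sub, sub_smul, one_smul]; abel
    have h := hg_convex.2 (Set.mem_univ x) (Set.mem_univ y)
      (by linarith [ht.2] : (0:ℝ) ≤ 1 - t) (le_of_lt ht0) (by ring)
    rw [← hcomb] at h
    simp only [smul_eq_mul] at h
    rw [div_le_iff₀ ht0]
    nlinarith [h]
  linarith

lemma descent {β : ℝ} (hβ : 0 < β) {g : H → ℝ} {g' : H → H}
    (hg : ∀ z : H, HasGradientAt g (g' z) z)
    (hg_lip : ∀ z w : H, ‖g' z - g' w‖ ≤ β * ‖z - w‖) (x y : H) :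
    g y ≤ g x + ⟪g' x, y - x⟫ + β / 2 * ‖y - x‖ ^ 2 := by
  set w := y - x with hw
  have hg'cont : Continuous g' := by
    have : LipschitzWith β.toNNReal g' := by
      refine LipschitzWith.of_dist_le_mul (fun z z' => ?_)
      rw [dist_eq_norm, dist_eq_norm]
      calc ‖g' z - g' z'‖ ≤ β * ‖z - z'‖ := hg_lip z z'
        _ = β.toNNReal * ‖z - z'‖ := by rw [Real.coe_toNNReal _ hβ.le]
    exact this.continuous
  have hcont : Continuous (fun t : ℝ => ⟪g' (x + t • w), w⟫) := by
    exact (hg'cont.comp (by continuity)).inner continuous_const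
  have hφ : ∀ t ∈ Set.uIcc (0:ℝ) 1,
      HasDerivAt (fun s : ℝ => g (x + s • w)) ⟪g' (x + t • w), w⟫ t :=
    fun t _ => line_hasDerivAt t (hg _)
  have ftc := intervalIntegral.integral_eq_sub_of_hasDerivAt hφ
    (hcont.intervalIntegrable 0 1)
  have hbound : ∫ t in (0:ℝ)..1, ⟪g' (x + t • w), w⟫ ≤
      ∫ t in (0:ℝ)..1, (⟪g' x, w⟫ + t * (β * ‖w‖ ^ 2)) := by
    refine intervalIntegral.integral_mono_on (by norm_num)
      (hcont.intervalIntegrable 0 1)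
      (((by continuity : Continuous fun t : ℝ => ⟪g' x, w⟫ + t * (β * ‖w‖ ^ 2))).intervalIntegrable 0 1)
      (fun t ht => ?_)
    have h1 : ⟪g' (x + t • w), w⟫ - ⟪g' x, w⟫ = ⟪g' (x + t • w) - g' x, w⟫ := by
      rw [inner_sub_left]
    have h2 : ⟪g' (x + t • w) - g' x, w⟫ ≤ ‖g' (x + t • w) - g' x‖ * ‖w‖ :=
      real_inner_le_norm _ _
    have h3 : ‖g' (x + t • w) - g' x‖ ≤ β * ‖t • w‖ := by
      simpa using hg_lip (x + t • w) x
    have h4 : ‖t • w‖ = t * ‖w‖ := by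
      rw [norm_smul, Real.norm_eq_abs, abs_of_nonneg ht.1]
    have h5 := mul_le_mul_of_nonneg_right h3 (norm_nonneg w)
    rw [h4] at h5
    nlinarith [h5]
  have hval : ∫ t in (0:ℝ)..1, (⟪g' x, w⟫ + t * (β * ‖w‖ ^ 2)) =
      ⟪g' x, w⟫ + β / 2 * ‖w‖ ^ 2 := by
    rw [intervalIntegral.integral_add (intervalIntegrable_const)
      (((by continuity : Continuous fun t : ℝ => t * (β * ‖w‖ ^ 2))).intervalIntegrable 0 1),
      intervalIntegral.integral_mul_const, integral_id]
    norm_num; ring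
  have h0 : x + (0:ℝ) • w = x := by simp
  have h1' : x + (1:ℝ) • w = y := by simp [hw]
  rw [h0, h1'] at ftc
  linarith [ftc ▸ (hval ▸ hbound)]

lemma coco {β : ℝ} (hβ : 0 < β) {g : H → ℝ} {g' : H → H}
    (hg_convex : ConvexOn ℝ Set.univ g)
    (hg : ∀ z : H, HasGradientAt g (g' z) z)
    (hg_lip : ∀ z w : H, ‖g' z - g' w‖ ≤ β * ‖z - w‖) (x y : H) :
    1 / β * ‖g' y - g' x‖ ^ 2 ≤ ⟪g' y - g' x, y - x⟫ := by
  have key : ∀ p q : H, g p + ⟪g' p, q - p⟫ + 1 / (2 * β) * ‖g' q - g' p‖ ^ 2 ≤ g q := by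
    intro p q
    set d := g' q - g' p with hd
    set z := q - (1 / β) • d with hz
    have h1 := descent hβ hg hg_lip q z
    have h2 := grad_lower hg_convex hg p z
    have hzq : z - q = -((1 / β) • d) := by rw [hz]; abel
    have e1 : ⟪g' q, z - q⟫ = -(1 / β) * ⟪g' q, d⟫ := by
      rw [hzq, inner_neg_right, real_inner_smul_right]; ring
    have e2 : ‖z - q‖ ^ 2 = (1 / β) ^ 2 * ‖d‖ ^ 2 := by
      rw [hzq, norm_neg, norm_smul, Real.norm_eq_abs, mul_pow, sq_abs]
    have e3 : ⟪g' p, z - p⟫ = ⟪g' p, q - p⟫ - (1 / β) * ⟪g' p, d⟫ := by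
      have : z - p = (q - p) - (1 / β) • d := by rw [hz]; abel
      rw [this, inner_sub_right, real_inner_smul_right]
    have e4 : ⟪g' q, d⟫ - ⟪g' p, d⟫ = ‖d‖ ^ 2 := by
      rw [← inner_sub_left, ← hd, real_inner_self_eq_norm_sq]
    rw [e1, e2] at h1
    rw [e3] at h2
    have hβ' : (0:ℝ) < 1 / β := by positivity
    have e7 : (1 / β) * (⟪g' q, d⟫ - ⟪g' p, d⟫) = (1 / β) * ‖d‖ ^ 2 := by rw [e4]
    have hc : β / 2 * ((1 / β) ^ 2 * ‖d‖ ^ 2) = 1 / (2 * β) * ‖d‖ ^ 2 := by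
      field_simp
    have hb : 1 / (2 * β) * ‖d‖ ^ 2 + 1 / (2 * β) * ‖d‖ ^ 2 = (1 / β) * ‖d‖ ^ 2 := by
      field_simp; ring
    nlinarith [h1, h2, e7, hc, hb]
  have k1 := key x y
  have k2 := key y x
  have e5 : ‖g' x - g' y‖ = ‖g' y - g' x‖ := norm_sub_rev _ _
  have e6 : ⟪g' x, y - x⟫ + ⟪g' y, x - y⟫ = -⟪g' y - g' x, y - x⟫ := by
    have hxy : x - y = -(y - x) := by abel
    rw [hxy, inner_neg_right, inner_sub_left]; ring
  rw [e5] at k2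
  have hb2 : 1 / (2 * β) * ‖g' y - g' x‖ ^ 2 + 1 / (2 * β) * ‖g' y - g' x‖ ^ 2
      = (1 / β) * ‖g' y - g' x‖ ^ 2 := by field_simp; ring
  linarith [k1, k2, e6, hb2]

lemma expand_sq (a v : H) (t : ℝ) :
    ‖a - t • v‖ ^ 2 = ‖a‖ ^ 2 - 2 * t * ⟪a, v⟫ + t ^ 2 * ‖v‖ ^ 2 := by
  rw [norm_sub_sq_real, real_inner_smul_right, norm_smul, Real.norm_eq_abs, mul_pow, sq_abs]
  ring


end Helpers

/-- Convexity for extended-real-valued functions. -/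
def ConvexE {E : Type*} [AddCommGroup E] [Module ℝ E] (f : E → EReal) : Prop :=
  ∀ x y : E, ∀ a b : ℝ, 0 ≤ a → 0 ≤ b → a + b = 1 →
    f (a • x + b • y) ≤ (a : EReal) * f x + (b : EReal) * f y

/-- Fejér-type inequality for one proximal gradient step: if `xstar` minimizes `f + g`
and `xn1 = prox_{γ f}(xn - γ ∇g xn)` with `γ ∈ [ε, 2/β - ε]`, then
`‖xn1 - xstar‖² ≤ ‖xn - xstar‖² - ε² ‖∇g xn - ∇g xstar‖²`. -/
theorem proximal_gradient_step_fejer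
    {H : Type*} [NormedAddCommGroup H] [InnerProductSpace ℝ H] [FiniteDimensional ℝ H]
    (β : ℝ) (hβ : 0 < β)
    (f : H → EReal)
    (hf_proper : ∃ z, f z ≠ ⊤) (hf_ne_bot : ∀ z, f z ≠ ⊥)
    (hf_lsc : LowerSemicontinuous f) (hf_convex : ConvexE f)
    (g : H → ℝ) (g' : H → H)
    (hg_convex : ConvexOn ℝ Set.univ g)
    (hg_grad : ∀ z : H, HasGradientAt g (g' z) z)
    (hg_lip : ∀ z w : H, ‖g' z - g' w‖ ≤ β * ‖z - w‖)
    (xstar : H)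
    (hxstar : ∀ y : H, f xstar + (g xstar : EReal) ≤ f y + (g y : EReal))
    (ε : ℝ) (hε : 0 < ε) (hεβ : ε < 1/β)
    (γ : ℝ) (hγ : γ ∈ Set.Icc ε (2/β - ε))
    (xn xn1 : H)
    (hxn1 : ∀ y : H,
      (γ : EReal) * f xn1 + ((1/2 * ‖(xn - γ • g' xn) - xn1‖^2 : ℝ) : EReal) ≤
        (γ : EReal) * f y + ((1/2 * ‖(xn - γ • g' xn) - y‖^2 : ℝ) : EReal)) :
    ‖xn1 - xstar‖^2 ≤ ‖xn - xstar‖^2 - ε^2 * ‖g' xn - g' xstar‖^2 := by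
  obtain ⟨hγε, hγ2⟩ := hγ
  have hγpos : 0 < γ := lt_of_lt_of_le hε hγε
  set u := xn - γ • g' xn with hu
  obtain ⟨z, hz⟩ := hf_proper
  have hzreal : f z = ((f z).toReal : EReal) := (EReal.coe_toReal hz (hf_ne_bot z)).symm
  -- f xn1 is finite
  have h1top : f xn1 ≠ ⊤ := by
    intro htop
    have h := hxn1 z
    rw [htop, hzreal, ← EReal.coe_mul, ← EReal.coe_add] at h
    have hlhs : (γ : EReal) * (⊤ : EReal) + ((1/2 * ‖u - xn1‖^2 : ℝ) : EReal) = ⊤ := by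
      rw [EReal.mul_top_of_pos (by exact_mod_cast hγpos), EReal.top_add_coe]
    rw [hlhs] at h
    exact (EReal.coe_ne_top _) (top_le_iff.mp h)
  have hr1 : f xn1 = ((f xn1).toReal : EReal) := (EReal.coe_toReal h1top (hf_ne_bot xn1)).symm
  set r1 := (f xn1).toReal with hr1def
  -- f xstar is finite
  have hstop : f xstar ≠ ⊤ := by
    intro htop
    have h := hxstar z
    rw [htop, hzreal, ← EReal.coe_add] at h
    rw [EReal.top_add_coe] at h
    exact (EReal.coe_ne_top _) (top_le_iff.mp h)
  have hrs : f xstar = ((f xstar).toReal : EReal) := (EReal.coe_toReal hstop (hf_ne_bot xstar)).symm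
  set rs := (f xstar).toReal with hrsdef
  -- finiteness from upper bound
  have hfin : ∀ (y : H) (c : ℝ), f y ≤ (c : EReal) →
      f y = ((f y).toReal : EReal) ∧ (f y).toReal ≤ c := by
    intro y c hc
    have hyt : f y ≠ ⊤ := ne_top_of_le_ne_top (EReal.coe_ne_top c) hc
    have heq : f y = ((f y).toReal : EReal) := (EReal.coe_toReal hyt (hf_ne_bot y)).symm
    refine ⟨heq, ?_⟩
    rw [heq] at hc
    exact_mod_cast hc
  -- key1
  have key1 : ⟪u - xn1, xstar - xn1⟫ ≤ γ * (rs - r1) := by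
    have htend : Tendsto (fun t : ℝ => γ * (rs - r1) + t/2 * ‖xstar - xn1‖^2)
        (𝓝[>] (0:ℝ)) (𝓝 (γ * (rs - r1))) := by
      have h0 : Tendsto (fun t : ℝ => γ * (rs - r1) + t/2 * ‖xstar - xn1‖^2)
          (𝓝 (0:ℝ)) (𝓝 (γ * (rs - r1) + 0/2 * ‖xstar - xn1‖^2)) :=
        Continuous.tendsto (by fun_prop) 0
      have := h0.mono_left (nhdsWithin_le_nhds (s := Set.Ioi (0:ℝ)))
      simpa using this
    refine ge_of_tendsto htend ?_
    filter_upwards [Ioc_mem_nhdsGT_of_mem (by norm_num : (0:ℝ) ∈ Set.Ico (0:ℝ) 1)]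
      with t ht
    obtain ⟨ht0, ht1⟩ := ht
    set yt := xn1 + t • (xstar - xn1) with hyt
    have hcomb : yt = (1 - t) • xn1 + t • xstar := by
      rw [hyt, smul_sub, sub_smul, one_smul]; abel
    have hconv := hf_convex xn1 xstar (1 - t) t (by linarith) ht0.le (by ring)
    rw [← hcomb, hr1, hrs, ← EReal.coe_mul, ← EReal.coe_mul, ← EReal.coe_add] at hconv
    obtain ⟨hyteq, hytle⟩ := hfin yt _ hconv
    have h := hxn1 yt
    rw [hr1, hyteq, ← EReal.coe_mul, ← EReal.coe_mul, ← EReal.coe_add, ← EReal.coe_add] at h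
    have hre : γ * r1 + 1/2 * ‖u - xn1‖^2 ≤ γ * (f yt).toReal + 1/2 * ‖u - yt‖^2 := by
      exact_mod_cast h
    have hdiff : u - yt = (u - xn1) - t • (xstar - xn1) := by rw [hyt]; abel
    rw [hdiff, expand_sq] at hre
    have hst2 : γ * (f yt).toReal ≤ γ * ((1 - t) * r1 + t * rs) :=
      mul_le_mul_of_nonneg_left hytle hγpos.le
    have tmul : t * ⟪u - xn1, xstar - xn1⟫ ≤
        t * (γ * (rs - r1) + t/2 * ‖xstar - xn1‖^2) := by nlinarith [hre, hst2]
    exact le_of_mul_le_mul_left tmul ht0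
  -- key2
  have key2 : rs - r1 ≤ ⟪g' xstar, xn1 - xstar⟫ := by
    refine ge_of_tendsto (slope_tendsto (hg_grad xstar)) ?_
    filter_upwards [Ioc_mem_nhdsGT_of_mem (by norm_num : (0:ℝ) ∈ Set.Ico (0:ℝ) 1)]
      with t ht
    obtain ⟨ht0, ht1⟩ := ht
    set yt := xstar + t • (xn1 - xstar) with hyt
    have hcomb : yt = (1 - t) • xstar + t • xn1 := by
      rw [hyt, smul_sub, sub_smul, one_smul]; abel
    have hconv := hf_convex xstar xn1 (1 - t) t (by linarith) ht0.le (by ring)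
    rw [← hcomb, hr1, hrs, ← EReal.coe_mul, ← EReal.coe_mul, ← EReal.coe_add] at hconv
    obtain ⟨hyteq, hytle⟩ := hfin yt _ hconv
    have h := hxstar yt
    rw [hrs, hyteq, ← EReal.coe_add, ← EReal.coe_add] at h
    have hre : rs + g xstar ≤ (f yt).toReal + g yt := by exact_mod_cast h
    rw [le_div_iff₀ ht0]
    nlinarith [hre, hytle]
  -- combine
  have hkey : ⟪u - xn1, xstar - xn1⟫ ≤ γ * ⟪g' xstar, xn1 - xstar⟫ :=
    key1.trans (mul_le_mul_of_nonneg_left key2 hγpos.le)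
  have hid : ⟪(xn - xstar) - γ • (g' xn - g' xstar), xn1 - xstar⟫ - ‖xn1 - xstar‖^2
      = γ * ⟪g' xstar, xn1 - xstar⟫ - ⟪u - xn1, xstar - xn1⟫ := by
    rw [← real_inner_self_eq_norm_sq, hu]
    simp only [inner_sub_left, inner_sub_right, real_inner_smul_left, smul_sub,
      real_inner_comm xstar xn1]
    ring
  have h5 : ‖xn1 - xstar‖^2 ≤ ⟪(xn - xstar) - γ • (g' xn - g' xstar), xn1 - xstar⟫ := by
    linarith [hid, hkey]
  set p := (xn - xstar) - γ • (g' xn - g' xstar) with hp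
  have h6 : 2 * ⟪p, xn1 - xstar⟫ ≤ ‖p‖^2 + ‖xn1 - xstar‖^2 := by
    have hexp := norm_sub_sq_real p (xn1 - xstar)
    nlinarith [sq_nonneg ‖p - (xn1 - xstar)‖]
  have h7 : ‖p‖^2 = ‖xn - xstar‖^2 - 2 * γ * ⟪xn - xstar, g' xn - g' xstar⟫
      + γ^2 * ‖g' xn - g' xstar‖^2 := expand_sq _ _ _
  have hcoco := coco hβ hg_convex hg_grad hg_lip xstar xn
  rw [real_inner_comm] at hcoco
  have hprod : ε * ε ≤ γ * (2/β - γ) :=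
    mul_le_mul hγε (by linarith) hε.le hγpos.le
  have hA : ‖xn1 - xstar‖^2 ≤ ‖p‖^2 := by linarith [h5, h6]
  have hB := mul_le_mul_of_nonneg_left hcoco (by linarith : (0:ℝ) ≤ 2 * γ)
  have hC := mul_le_mul_of_nonneg_right hprod (sq_nonneg ‖g' xn - g' xstar‖)
  have hD : γ * (2/β - γ) * ‖g' xn - g' xstar‖^2
      = 2 * γ * (1/β * ‖g' xn - g' xstar‖^2) - γ^2 * ‖g' xn - g' xstar‖^2 := by ring
  linarith [hA, h7, hB, hC, hD]
end
end

section
/- Let H be a finite-dimensional real inner product space, let β > 0, let C be a nonempty closed convex subset of H, let g : H → ℝ be convex and differentiable with β-Lipschitz gradient, assume that g attains its minimum over C, and set μ = min_{x ∈ C} g(x). Let x₀ ∈ C, let 0 < ε < 1/β, let (γₙ) be a sequence in [ε, 2/β − ε], and define xₙ₊₁ = proj_C(xₙ − γₙ ∇g(xₙ)). Then (g(xₙ)) is nonincreasing, g(xₙ) → μ, and ∑ₙ (g(xₙ) − μ) < +∞. -/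
open Filter Topology RealInnerProductSpace

noncomputable section


section Aux

variable {H : Type*} [NormedAddCommGroup H] [InnerProductSpace ℝ H] [FiniteDimensional ℝ H]

lemma pg_line_hasDerivAt (g : H → ℝ) (g' : H → H)
    (hg_grad : ∀ z : H, HasGradientAt g (g' z) z) (x d : H) (t : ℝ) :
    HasDerivAt (fun t : ℝ => g (x + t • d)) ⟪g' (x + t • d), d⟫ t := by
  have hline : HasDerivAt (fun t : ℝ => x + t • d) d t := by
    simpa using ((hasDerivAt_id t).smul_const d).const_add x
  have h1 := (hg_grad (x + t • d)).hasFDerivAt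
  have := h1.comp_hasDerivAt t hline
  simp at this
  exact this

/-- Gradient inequality for convex functions. -/
lemma pg_convex_grad_ineq (g : H → ℝ) (g' : H → H)
    (hg_convex : ConvexOn ℝ Set.univ g)
    (hg_grad : ∀ z : H, HasGradientAt g (g' z) z) (x y : H) :
    g x + ⟪g' x, y - x⟫ ≤ g y := by
  set d := y - x with hd
  have hφ : ConvexOn ℝ Set.univ (g ∘ (AffineMap.lineMap x y : ℝ →ᵃ[ℝ] H)) := by
    have := hg_convex.comp_affineMap (AffineMap.lineMap x y : ℝ →ᵃ[ℝ] H)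
    simpa using this
  have hderiv : HasDerivAt (g ∘ (AffineMap.lineMap x y : ℝ →ᵃ[ℝ] H)) ⟪g' x, d⟫ 0 := by
    have h := pg_line_hasDerivAt g g' hg_grad x d 0
    have heq : (g ∘ (AffineMap.lineMap x y : ℝ →ᵃ[ℝ] H)) = fun t : ℝ => g (x + t • d) := by
      funext t
      simp [AffineMap.lineMap_apply, hd, add_comm]
    rw [heq]
    simpa using h
  have := hφ.le_slope_of_hasDerivAt (Set.mem_univ 0) (Set.mem_univ 1) one_pos hderiv
  have hslope : slope (g ∘ (AffineMap.lineMap x y : ℝ →ᵃ[ℝ] H)) 0 1 = g y - g x := by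
    simp [slope_def_field, AffineMap.lineMap_apply]
  rw [hslope] at this
  linarith

/-- Descent lemma for functions with Lipschitz gradient. -/
lemma pg_descent (β : ℝ) (hβ : 0 < β) (g : H → ℝ) (g' : H → H)
    (hg_grad : ∀ z : H, HasGradientAt g (g' z) z)
    (hg_lip : ∀ z w : H, ‖g' z - g' w‖ ≤ β * ‖z - w‖) (x y : H) :
    g y ≤ g x + ⟪g' x, y - x⟫ + β / 2 * ‖y - x‖ ^ 2 := by
  set d := y - x with hd
  have hcont : Continuous g' := by
    have : LipschitzWith β.toNNReal g' := by
      apply LipschitzWith.of_dist_le_mul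
      intro z w
      simpa [dist_eq_norm, Real.coe_toNNReal _ hβ.le] using hg_lip z w
    exact this.continuous
  have hφ : ∀ t : ℝ, HasDerivAt (fun t : ℝ => g (x + t • d)) ⟪g' (x + t • d), d⟫ t :=
    pg_line_hasDerivAt g g' hg_grad x d
  have hcont1 : Continuous fun t : ℝ => ⟪g' (x + t • d), d⟫ :=
    Continuous.inner (hcont.comp (by continuity)) continuous_const
  have hint : ∫ t in (0:ℝ)..1, ⟪g' (x + t • d), d⟫ = g y - g x := by
    have := intervalIntegral.integral_eq_sub_of_hasDerivAt
      (f := fun t : ℝ => g (x + t • d)) (fun t _ => hφ t)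
      (hcont1.intervalIntegrable 0 1)
    simpa [hd] using this
  have hmono : ∫ t in (0:ℝ)..1, ⟪g' (x + t • d), d⟫ ≤
      ∫ t in (0:ℝ)..1, (⟪g' x, d⟫ + (β * ‖d‖ ^ 2) * t) := by
    apply intervalIntegral.integral_mono_on zero_le_one (hcont1.intervalIntegrable 0 1)
      (by apply Continuous.intervalIntegrable; fun_prop)
    intro t ht
    have h1 : ⟪g' (x + t • d) - g' x, d⟫ ≤ β * t * ‖d‖ ^ 2 := by
      have h2 := real_inner_le_norm (g' (x + t • d) - g' x) d
      have h3 : ‖g' (x + t • d) - g' x‖ ≤ β * (t * ‖d‖) := by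
        have := hg_lip (x + t • d) x
        simpa [norm_smul, abs_of_nonneg ht.1] using this
      nlinarith [norm_nonneg d, norm_nonneg (g' (x + t • d) - g' x)]
    have h4 : ⟪g' (x + t • d), d⟫ = ⟪g' x, d⟫ + ⟪g' (x + t • d) - g' x, d⟫ := by
      rw [inner_sub_left]; ring
    rw [h4]; nlinarith
  have hval : ∫ t in (0:ℝ)..1, (⟪g' x, d⟫ + (β * ‖d‖ ^ 2) * t) =
      ⟪g' x, d⟫ + (β * ‖d‖ ^ 2) * (1 / 2) := by
    rw [intervalIntegral.integral_add intervalIntegrable_const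
        ((by fun_prop : Continuous fun t : ℝ => β * ‖d‖ ^ 2 * t).intervalIntegrable 0 1),
      intervalIntegral.integral_const, intervalIntegral.integral_const_mul, integral_id]
    norm_num
  rw [hint] at hmono
  rw [hval] at hmono
  linarith

end Aux

section AuxProj

variable {H : Type*} [NormedAddCommGroup H] [InnerProductSpace ℝ H] [FiniteDimensional ℝ H]

/-- Variational characterization of the projection. -/
lemma pg_proj_inner_le (C : Set H) (hC_convex : Convex ℝ C)
    (projC : H → H)
    (hproj : ∀ z : H, projC z ∈ C ∧ ∀ w ∈ C, ‖z - projC z‖ ≤ ‖z - w‖) :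
    ∀ z : H, ∀ w ∈ C, ⟪z - projC z, w - projC z⟫ ≤ 0 := by
  intro z w hw
  haveI : Nonempty C := ⟨⟨projC z, (hproj z).1⟩⟩
  have h1 : ‖z - projC z‖ = ⨅ w : C, ‖z - (w : H)‖ := by
    refine le_antisymm (le_ciInf fun p => (hproj z).2 p p.2) ?_
    exact ciInf_le ⟨0, by rintro r ⟨p, rfl⟩; exact norm_nonneg _⟩ (⟨projC z, (hproj z).1⟩ : C)
  exact (norm_eq_iInf_iff_real_inner_le_zero hC_convex (hproj z).1).1 h1 w hw

end AuxProj

set_option maxHeartbeats 1000000 in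

/-- Monotone convergence of the values along the projected gradient iterates:
`g(xₙ)` is nonincreasing, converges to the optimal value `μ = min_C g`, and
`∑ₙ (g(xₙ) - μ) < +∞`. -/
theorem projected_gradient_value_convergence
    {H : Type*} [NormedAddCommGroup H] [InnerProductSpace ℝ H] [FiniteDimensional ℝ H]
    (β : ℝ) (hβ : 0 < β)
    (C : Set H) (hC_ne : C.Nonempty) (hC_closed : IsClosed C) (hC_convex : Convex ℝ C)
    (g : H → ℝ) (g' : H → H)
    (hg_convex : ConvexOn ℝ Set.univ g)
    (hg_grad : ∀ z : H, HasGradientAt g (g' z) z)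
    (hg_lip : ∀ z w : H, ‖g' z - g' w‖ ≤ β * ‖z - w‖)
    (xstar : H) (hxstar_mem : xstar ∈ C) (hxstar : ∀ y ∈ C, g xstar ≤ g y)
    (μ : ℝ) (hμ : μ = g xstar)
    (projC : H → H)
    (hproj : ∀ z : H, projC z ∈ C ∧ ∀ w ∈ C, ‖z - projC z‖ ≤ ‖z - w‖)
    (ε : ℝ) (hε : 0 < ε) (hεβ : ε < 1/β)
    (γ : ℕ → ℝ) (hγ : ∀ n, γ n ∈ Set.Icc ε (2/β - ε))
    (x : ℕ → H) (hx0 : x 0 ∈ C)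
    (hiter : ∀ n, x (n+1) = projC (x n - γ n • g' (x n))) :
    Antitone (fun n => g (x n)) ∧
      Tendsto (fun n => g (x n)) atTop (𝓝 μ) ∧
      Summable (fun n => g (x n) - μ) := by
  have hproj_ineq := pg_proj_inner_le C hC_convex projC hproj
  -- basic facts about constants
  have h2βε : 0 < 2 / β - ε := by
    have h1 : (1:ℝ)/β < 2/β := by
      rw [div_lt_div_iff₀ hβ hβ]; nlinarith
    linarith
  set c : ℝ := 1 / (2 / β - ε) - β / 2 with hc_def
  clear_value c
  have hc : 0 < c := by
    have h1 : 2 / β - ε < 2 / β := by linarith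
    have h2 : β / 2 < 1 / (2 / β - ε) := by
      rw [lt_div_iff₀ h2βε]
      have : β * (2/β) = 2 := by field_simp
      nlinarith
    rw [hc_def]; linarith
  have hγpos : ∀ n, 0 < γ n := fun n => lt_of_lt_of_le hε (hγ n).1
  -- membership
  have hmem : ∀ n, x n ∈ C := by
    intro n
    induction n with
    | zero => exact hx0
    | succ n _ => rw [hiter n]; exact (hproj _).1
  have hμ_le : ∀ n, μ ≤ g (x n) := fun n => hμ ▸ hxstar _ (hmem n)
  -- per-step inequalities
  have key1 : ∀ n, g (x (n+1)) + c * ‖x n - x (n+1)‖ ^ 2 ≤ g (x n) := by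
    intro n
    set s := g' (x n) with hs
    set p := x (n+1) with hp
    set d := x n - p with hdd
    clear_value d
    have hpC : p = projC (x n - γ n • s) := hiter n
    clear_value s p
    have hv : ⟪(x n - γ n • s) - p, x n - p⟫ ≤ 0 := by
      rw [hpC]; exact hproj_ineq _ _ (hmem n)
    have hv' : ‖d‖ ^ 2 ≤ γ n * ⟪s, d⟫ := by
      have h9 : ⟪d - γ n • s, d⟫ ≤ 0 := by
        have heq : (x n - γ n • s) - p = d - γ n • s := by rw [hdd]; abel
        rwa [heq, ← hdd] at hv
      rw [inner_sub_left, real_inner_smul_left, real_inner_self_eq_norm_sq] at h9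
      linarith
    have hdesc := pg_descent β hβ g g' hg_grad hg_lip (x n) p
    have hpd : p - x n = -d := by rw [hdd]; abel
    rw [hpd, inner_neg_right, norm_neg, ← hs] at hdesc
    have hcle : c ≤ 1 / γ n - β / 2 := by
      have h1 : 1 / (2/β - ε) ≤ 1 / γ n :=
        one_div_le_one_div_of_le (hγpos n) (hγ n).2
      rw [hc_def]; linarith
    have h1γ : (1 / γ n) * ‖d‖ ^ 2 ≤ ⟪s, d⟫ := by
      rw [one_div, inv_mul_le_iff₀ (hγpos n)]
      nlinarith [hγpos n]
    have hexp : c * ‖d‖ ^ 2 ≤ (1 / γ n) * ‖d‖ ^ 2 - β / 2 * ‖d‖ ^ 2 := by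
      nlinarith [sq_nonneg ‖d‖]
    linarith
  have hanti : Antitone fun n => g (x n) := by
    apply antitone_nat_of_succ_le
    intro n
    have := key1 n
    nlinarith [sq_nonneg ‖x n - x (n+1)‖, hc]
  have key2 : ∀ n, 2 * ε * (g (x (n+1)) - μ) ≤
      ‖x n - xstar‖ ^ 2 - ‖x (n+1) - xstar‖ ^ 2 + ‖x n - x (n+1)‖ ^ 2 := by
    intro n
    set s := g' (x n) with hs
    set p := x (n+1) with hp
    set d := x n - p with hdd
    clear_value d
    have hpC : p = projC (x n - γ n • s) := hiter n
    clear_value s p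
    have hv : ⟪(x n - γ n • s) - p, xstar - p⟫ ≤ 0 := by
      rw [hpC]; exact hproj_ineq _ _ hxstar_mem
    have hv' : ⟪d, xstar - p⟫ ≤ γ n * ⟪s, xstar - p⟫ := by
      have heq : (x n - γ n • s) - p = d - γ n • s := by rw [hdd]; abel
      rw [heq, inner_sub_left, real_inner_smul_left] at hv
      linarith
    -- inner product identity
    have hid : 2 * ⟪d, xstar - p⟫ = ‖d‖ ^ 2 + ‖xstar - p‖ ^ 2 - ‖x n - xstar‖ ^ 2 := by
      have h := @norm_sub_sq_real H _ _ d (xstar - p)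
      have heq : d - (xstar - p) = x n - xstar := by rw [hdd]; abel
      rw [heq] at h
      linarith
    -- gradient inequality at x n towards xstar
    have hB := pg_convex_grad_ineq g g' hg_convex hg_grad (x n) xstar
    rw [← hs] at hB
    -- descent at x n towards p
    have hA := pg_descent β hβ g g' hg_grad hg_lip (x n) p
    have hpd : p - x n = -d := by rw [hdd]; abel
    rw [hpd, inner_neg_right, norm_neg, ← hs] at hA
    -- split inner product
    have hsplit : ⟪s, xstar - p⟫ = ⟪s, xstar - x n⟫ + ⟪s, d⟫ := by
      rw [← inner_add_right]
      congr 1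
      rw [hdd]; abel
    have hsB : ⟪s, xstar - x n⟫ ≤ μ - g (x n) := by
      rw [hμ]; linarith [hB]
    have hsA : ⟪s, d⟫ ≤ g (x n) - g p + β / 2 * ‖d‖ ^ 2 := by linarith [hA]
    have hcomb : ⟪s, xstar - p⟫ ≤ μ - g p + β / 2 * ‖d‖ ^ 2 := by
      rw [hsplit]; linarith
    -- assemble
    have hγβ : γ n * β ≤ 2 - ε * β := by
      have := (hγ n).2
      have h2 : (2/β) * β = 2 := by field_simp
      nlinarith [hβ]
    have hgpμ : 0 ≤ g p - μ := by rw [hp]; linarith [hμ_le (n+1)]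
    have hεγ : ε ≤ γ n := (hγ n).1
    have hnorm_sw : ‖xstar - p‖ = ‖p - xstar‖ := norm_sub_rev _ _
    have hmul := mul_le_mul_of_nonneg_left hcomb (by linarith [hγpos n] : (0:ℝ) ≤ 2 * γ n)
    have hmain : 2 * γ n * (g p - μ) ≤
        ‖x n - xstar‖ ^ 2 - ‖xstar - p‖ ^ 2 + (γ n * β - 1) * ‖d‖ ^ 2 := by
      nlinarith [hv', hid, hmul]
    rw [hnorm_sw] at hmain
    have hεβ0 : 0 ≤ ε * β := by positivity
    have hprod1 : 0 ≤ (γ n - ε) * (g p - μ) :=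
      mul_nonneg (by linarith) hgpμ
    have hprod2 : 0 ≤ (2 - γ n * β) * ‖d‖ ^ 2 :=
      mul_nonneg (by linarith) (sq_nonneg ‖d‖)
    linarith [hmain, hprod1, hprod2]
  -- summability
  set f : ℕ → ℝ := fun n => g (x n) - μ with hf_def
  have hf_nonneg : ∀ n, 0 ≤ f n := fun n => sub_nonneg.2 (hμ_le n)
  have hsum_d : ∀ N : ℕ, ∑ n ∈ Finset.range N, c * ‖x n - x (n+1)‖ ^ 2 ≤ g (x 0) - μ := by
    intro N
    have htel : ∑ n ∈ Finset.range N, (g (x n) - g (x (n+1))) = g (x 0) - g (x N) :=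
      Finset.sum_range_sub' (fun n => g (x n)) N
    have h1 : ∑ n ∈ Finset.range N, c * ‖x n - x (n+1)‖ ^ 2 ≤
        ∑ n ∈ Finset.range N, (g (x n) - g (x (n+1))) := by
      apply Finset.sum_le_sum
      intro n _
      linarith [key1 n]
    rw [htel] at h1
    linarith [hμ_le N]
  have hM : ∀ N : ℕ, ∑ n ∈ Finset.range N, f (n+1) ≤
      (‖x 0 - xstar‖ ^ 2 + (g (x 0) - μ) / c) / (2 * ε) := by
    intro N
    have h1 : ∑ n ∈ Finset.range N, 2 * ε * f (n+1) ≤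
        ∑ n ∈ Finset.range N,
          (‖x n - xstar‖ ^ 2 - ‖x (n+1) - xstar‖ ^ 2 + ‖x n - x (n+1)‖ ^ 2) := by
      apply Finset.sum_le_sum
      intro n _
      exact key2 n
    have h2 : ∑ n ∈ Finset.range N,
          (‖x n - xstar‖ ^ 2 - ‖x (n+1) - xstar‖ ^ 2 + ‖x n - x (n+1)‖ ^ 2)
        = (‖x 0 - xstar‖ ^ 2 - ‖x N - xstar‖ ^ 2) +
          ∑ n ∈ Finset.range N, ‖x n - x (n+1)‖ ^ 2 := by
      rw [Finset.sum_add_distrib, Finset.sum_range_sub' (fun n => ‖x n - xstar‖ ^ 2) N]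
    have h3 : ∑ n ∈ Finset.range N, ‖x n - x (n+1)‖ ^ 2 ≤ (g (x 0) - μ) / c := by
      rw [le_div_iff₀ hc]
      have := hsum_d N
      calc (∑ n ∈ Finset.range N, ‖x n - x (n+1)‖ ^ 2) * c
          = ∑ n ∈ Finset.range N, c * ‖x n - x (n+1)‖ ^ 2 := by
            rw [Finset.sum_mul]; congr 1; funext n; ring
        _ ≤ g (x 0) - μ := hsum_d N
    have h4 : 2 * ε * ∑ n ∈ Finset.range N, f (n+1) ≤
        ‖x 0 - xstar‖ ^ 2 + (g (x 0) - μ) / c := by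
      rw [Finset.mul_sum]
      rw [h2] at h1
      have h5 := sq_nonneg ‖x N - xstar‖
      linarith
    rw [le_div_iff₀ (by linarith : (0:ℝ) < 2 * ε)]
    linarith
  have hsum_shift : Summable (fun n => f (n+1)) :=
    summable_of_sum_range_le (fun n => hf_nonneg (n+1)) hM
  have hsum : Summable f := (summable_nat_add_iff 1).1 hsum_shift
  refine ⟨hanti, ?_, hsum⟩
  have h0 : Tendsto f atTop (𝓝 0) := hsum.tendsto_atTop_zero
  have := h0.add_const μ
  simpa [hf_def] using this
end
end
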